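/- arXiv:1609.07791 — 4 statements merged into one kernel-verified Lean document; each statement's English description precedes it below -/
import Mathlib

section
/- Let f₁,…,fₙ be linearly independent linear functionals on a locally convex topological vector space E. Let k be the dimension of the subspace G of ℂⁿ consisting of those vectors (c₁,…,cₙ) such that ∑ᵢ cᵢ fᵢ is continuous. Then the codimension in E of the closure of ker(f₁,…,fₙ) = ⋂ᵢ ker fᵢ equals k. -/
theorem codim_closure_inter_ker_eq_dim_continuous_combinations
    {E : Type*} [AddCommGroup E] [Module ℂ E] [TopologicalSpace E]
    [IsTopologicalAddGroup E] [ContinuousSMul ℂ E] [LocallyConvexSpace ℝ E]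
    [Module ℝ E] [IsScalarTower ℝ ℂ E]
    (n : ℕ) (f : Fin n → (E →ₗ[ℂ] ℂ)) (hf : LinearIndependent ℂ f)
    (G : Submodule ℂ (Fin n → ℂ))
    (hG : ∀ c : Fin n → ℂ, c ∈ G ↔ Continuous (fun x => ∑ i, c i * f i x))
    (k : ℕ) (hk : Module.finrank ℂ G = k) :
    Module.finrank ℂ
      (E ⧸ (⨅ i, LinearMap.ker (f i)).topologicalClosure) = k := by
  classical
  set N : Submodule ℂ E := ⨅ i, LinearMap.ker (f i) with hN
  set C : Submodule ℂ E := N.topologicalClosure with hC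
  haveI : IsClosed (C : Set E) := N.isClosed_topologicalClosure
  -- the combination map
  set g : (Fin n → ℂ) → (E →ₗ[ℂ] ℂ) := fun c => ∑ i, c i • f i with hg
  have hg_apply : ∀ c x, g c x = ∑ i, c i * f i x := by
    intro c x
    simp [hg, LinearMap.sum_apply]
  -- G membership in terms of g
  have hGg : ∀ c, c ∈ G ↔ Continuous (g c) := by
    intro c
    rw [hG]
    constructor
    · intro h; convert h using 1; ext x; exact hg_apply c x
    · intro h; convert h using 1; ext x; exact (hg_apply c x).symm
  -- N is contained in ker (g c)
  have hNker : ∀ c, N ≤ LinearMap.ker (g c) := by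
    intro c x hx
    have hx' : ∀ i, f i x = 0 := by
      intro i
      exact (Submodule.mem_iInf _).1 hx i
    simp [LinearMap.mem_ker, hg_apply, hx']
  -- C is contained in ker (g c) when g c is continuous
  have hCker : ∀ c ∈ G, C ≤ LinearMap.ker (g c) := by
    intro c hc
    have hcont : Continuous (g c) := (hGg c).1 hc
    have hclosed : IsClosed ((LinearMap.ker (g c) : Submodule ℂ E) : Set E) := by
      have : (LinearMap.ker (g c) : Set E) = (g c) ⁻¹' {0} := by
        ext x; simp [LinearMap.mem_ker]
      rw [this]
      exact IsClosed.preimage hcont isClosed_singleton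
    exact Submodule.topologicalClosure_minimal _ (hNker c) hclosed
  -- finite dimensionality of E ⧸ N
  have hker : N = LinearMap.ker (LinearMap.pi f) := (LinearMap.ker_pi f).symm
  haveI : FiniteDimensional ℂ (E ⧸ N) :=
    FiniteDimensional.of_injective (N.liftQ (LinearMap.pi f) hker.le)
      (LinearMap.ker_eq_bot.1 (Submodule.ker_liftQ_eq_bot' N (LinearMap.pi f) hker))
  have hNC : N ≤ C := Submodule.le_topologicalClosure N
  -- E ⧸ C is a quotient of E ⧸ N
  haveI : FiniteDimensional ℂ (E ⧸ C) := by
    refine Module.Finite.of_surjective (Submodule.mapQ N C LinearMap.id hNC) ?_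
    intro y
    obtain ⟨x, rfl⟩ := Submodule.Quotient.mk_surjective C y
    exact ⟨Submodule.Quotient.mk x, rfl⟩
  -- the linear map from G to the dual of E ⧸ C
  set Φ : G →ₗ[ℂ] Module.Dual ℂ (E ⧸ C) :=
    { toFun := fun c => C.liftQ (g c.1) (hCker c.1 c.2)
      map_add' := by
        intro c d
        apply Submodule.linearMap_qext
        ext x
        simp [hg_apply, add_mul, Finset.sum_add_distrib]
      map_smul' := by
        intro a c
        apply Submodule.linearMap_qext
        ext x
        simp [hg_apply, Finset.mul_sum, mul_assoc] } with hΦ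
  have hΦ_bij : Function.Bijective Φ := by
    constructor
    · rw [← LinearMap.ker_eq_bot, LinearMap.ker_eq_bot']
      intro c hc
      have hgc : g c.1 = 0 := by
        have := congrArg (fun (ψ : Module.Dual ℂ (E ⧸ C)) => ψ.comp C.mkQ) hc
        simpa [hΦ, Submodule.liftQ_mkQ] using this
      have : ∀ i, c.1 i = 0 := by
        apply Fintype.linearIndependent_iff.1 hf
        exact hgc
      ext i
      exact this i
    · intro ψ
      have hψcont : Continuous ψ := LinearMap.continuous_of_finiteDimensional ψ
      set K : E →ₗ[ℂ] ℂ := ψ.comp C.mkQ with hK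
      have hKcont : Continuous K := hψcont.comp continuous_quot_mk
      have hKker : N ≤ LinearMap.ker K := by
        intro x hx
        have : C.mkQ x = 0 := (Submodule.Quotient.mk_eq_zero C).2 (hNC hx)
        simp [hK, LinearMap.mem_ker, this]
      have hmem : K ∈ Submodule.span ℂ (Set.range f) :=
        mem_span_of_iInf_ker_le_ker hKker
      obtain ⟨c, hc⟩ := (Submodule.mem_span_range_iff_exists_fun ℂ).1 hmem
      have hgc : g c = K := hc
      have hcG : c ∈ G := (hGg c).2 (hgc ▸ hKcont)
      refine ⟨⟨c, hcG⟩, ?_⟩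
      apply Submodule.linearMap_qext
      simp [hΦ, Submodule.liftQ_mkQ, hgc, hK]
  have : Module.finrank ℂ G = Module.finrank ℂ (Module.Dual ℂ (E ⧸ C)) :=
    (LinearEquiv.ofBijective Φ hΦ_bij).finrank_eq
  rw [Subspace.dual_finrank_eq] at this
  rw [← hk, this]
end

section
/- If f₁,…,fₙ are completely discontinuous linear functionals on a locally convex space E, then for any vector (a₁,…,aₙ) ∈ ℂⁿ, the set of solutions x ∈ E of the finite moment problem fⱼ(x) = aⱼ for 1 ≤ j ≤ n is dense in E. -/
open LinearMap Set

/-- Transfer `LocallyConvexSpace ℝ E` from the `Module.complexToReal` scalar action to a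
given real module structure compatible with the complex one. -/
theorem lcs_binder_aux {E : Type*} [AddCommGroup E] [Module ℂ E] [TopologicalSpace E]
    [hl : LocallyConvexSpace ℝ E] [m : Module ℝ E] [IsScalarTower ℝ ℂ E] :
    LocallyConvexSpace ℝ E := by
  have hm : m = Module.complexToReal E := by
    refine Module.ext' _ _ (fun r x => ?_)
    rw [← smul_one_smul ℂ r x]
    rw [show r • (1 : ℂ) = (r : ℂ) by simp]
    exact Complex.coe_smul r x
  rw [hm]
  exact hl

theorem dense_solutions_finite_moment_problem
    {E : Type*} [AddCommGroup E] [Module ℂ E] [TopologicalSpace E]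
    [IsTopologicalAddGroup E] [ContinuousSMul ℂ E] [LocallyConvexSpace ℝ E]
    [Module ℝ E] [IsScalarTower ℝ ℂ E]
    (n : ℕ) (f : Fin n → (E →ₗ[ℂ] ℂ))
    (hcd : ∀ c : Fin n → ℂ, Continuous (fun x => ∑ i, c i * f i x) → c = 0)
    (a : Fin n → ℂ) :
    Dense {x : E | ∀ i, f i x = a i} := by
  classical
  have : ContinuousSMul ℝ E := IsScalarTower.continuousSMul ℂ
  set F : E →ₗ[ℂ] (Fin n → ℂ) := LinearMap.pi f with hF
  -- Step 1: F is surjective, so the solution set is a coset of ker F.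
  have hsurj : Function.Surjective F := by
    rw [← LinearMap.range_eq_top]
    by_contra h
    obtain ⟨φ, hφ0, hφ⟩ := (LinearMap.range F).exists_dual_map_eq_bot_of_lt_top
      (lt_top_iff_ne_top.2 h) inferInstance
    set c : Fin n → ℂ := fun i => φ (Pi.single i 1) with hc
    have hzero : ∀ x : E, ∑ i, c i * f i x = 0 := by
      intro x
      have hmem : φ (F x) = 0 := by
        rw [← Submodule.mem_bot (R := ℂ), ← hφ]
        exact Submodule.mem_map_of_mem (LinearMap.mem_range_self F x)
      have : φ (F x) = ∑ i, c i * f i x := by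
        have : F x = ∑ i, (f i x) • (Pi.single i 1 : Fin n → ℂ) := by
          ext j
          simp [hF, LinearMap.pi_apply, Finset.sum_apply, Pi.single_apply, mul_comm]
        rw [this, map_sum]
        simp [hc, mul_comm]
      rw [← this, hmem]
    have hc0 : c = 0 := hcd c (by simpa [funext hzero] using continuous_const)
    apply hφ0
    apply Module.Basis.ext (Pi.basisFun ℂ (Fin n))
    intro i
    simpa [Pi.basisFun_apply] using congrFun hc0 i
  obtain ⟨x₀, hx₀⟩ := hsurj a
  -- Step 2: the joint kernel is dense.
  set p : Submodule ℂ E := ⨅ i, LinearMap.ker (f i) with hp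
  have hdense : Dense (p : Set E) := by
    rw [dense_iff_closure_eq]
    by_contra h
    obtain ⟨z, hz⟩ : ∃ z : E, z ∉ p.topologicalClosure := by
      by_contra hz
      push_neg at hz
      apply h
      exact eq_univ_of_forall hz
    have hlcs : LocallyConvexSpace ℝ E := lcs_binder_aux
    have hKclosed : IsClosed (p.topologicalClosure : Set E) := isClosed_closure
    have hKconvex : Convex ℝ (p.topologicalClosure : Set E) :=
      (Submodule.restrictScalars ℝ p.topologicalClosure).convex
    obtain ⟨g, u, hgu, huz⟩ := geometric_hahn_banach_closed_point hKconvex hKclosed hz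
    -- g vanishes on the closure K
    have hg0 : ∀ b ∈ p.topologicalClosure, g b = 0 := by
      intro b hb
      by_contra hgb
      have hub : ∀ t : ℝ, t * g b < u := by
        intro t
        have hsm : ((t : ℂ)) • b = t • b := by
          rw [← smul_one_smul ℂ t b]
          norm_num
        have : (t • b) ∈ p.topologicalClosure := by
          rw [← hsm]; exact Submodule.smul_mem _ (t : ℂ) hb
        have := hgu _ this
        simpa [map_smul, smul_eq_mul] using this
      rcases lt_or_gt_of_ne hgb with hneg | hpos
      · have := hub (u / g b - 1)
        rw [div_sub_one (ne_of_lt hneg), div_mul_cancel₀ _ (ne_of_lt hneg)] at this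
        linarith
      · have := hub (u / g b + 1)
        rw [div_add_one (ne_of_gt hpos), div_mul_cancel₀ _ (ne_of_gt hpos)] at this
        linarith
    have hgz : g z ≠ 0 := by
      have h0 : (0 : E) ∈ p.topologicalClosure := Submodule.zero_mem _
      have := hgu 0 h0
      simp only [map_zero] at this
      linarith
    -- complexify g
    set gc : E →ₗ[ℂ] ℂ := LinearMap.extendTo𝕜' (g : E →ₗ[ℝ] ℝ) with hgc
    have hgcapply : ∀ x : E, gc x = (g x : ℂ) - Complex.I * (g ((Complex.I : ℂ) • x) : ℂ) := by
      intro x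
      exact LinearMap.extendTo𝕜'_apply (g : E →ₗ[ℝ] ℝ) x
    have hgccont : Continuous gc := by
      simp only [funext hgcapply]
      fun_prop
    have hker : p ≤ LinearMap.ker gc := by
      intro b hb
      have hb' : b ∈ p.topologicalClosure := Submodule.le_topologicalClosure p hb
      have hib : (Complex.I : ℂ) • b ∈ p.topologicalClosure :=
        Submodule.smul_mem _ _ hb'
      simp [LinearMap.mem_ker, hgcapply, hg0 b hb', hg0 _ hib]
    have hspan : gc ∈ Submodule.span ℂ (range f) := by
      apply mem_span_of_iInf_ker_le_ker (L := f) (K := gc)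
      rw [← hp]; exact hker
    obtain ⟨c, hcsum⟩ := (Submodule.mem_span_range_iff_exists_fun ℂ).1 hspan
    have hcont : Continuous (fun x : E => ∑ i, c i * f i x) := by
      have : (fun x : E => ∑ i, c i * f i x) = fun x => gc x := by
        funext x
        rw [← hcsum]
        simp [LinearMap.sum_apply, LinearMap.smul_apply, smul_eq_mul]
      rw [this]
      exact hgccont
    have hc0 : c = 0 := hcd c hcont
    have : gc = 0 := by rw [← hcsum, hc0]; simp
    have : gc z = 0 := by rw [this]; simp
    have : g z = 0 := by
      have := congrArg Complex.re ((hgcapply z).symm.trans this)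
      simpa using this
    exact hgz this
  -- Step 3: translate the dense kernel by x₀.
  have hfx₀ : ∀ i, f i x₀ = a i := fun i => congrFun hx₀ i
  have hset : {x : E | ∀ i, f i x = a i} = (Homeomorph.addLeft x₀) '' (p : Set E) := by
    ext x
    simp only [Set.mem_setOf_eq, Set.mem_image, SetLike.mem_coe, Homeomorph.coe_addLeft]
    constructor
    · intro hx
      refine ⟨x - x₀, ?_, by abel⟩
      rw [hp, Submodule.mem_iInf]
      intro i
      rw [LinearMap.mem_ker, map_sub, hx i, hfx₀ i, sub_self]
    · rintro ⟨y, hy, rfl⟩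
      intro i
      rw [hp, Submodule.mem_iInf] at hy
      have := hy i
      rw [LinearMap.mem_ker] at this
      rw [map_add, this, hfx₀ i, add_zero]
  rw [hset, dense_iff_closure_eq, ← Homeomorph.image_closure,
    dense_iff_closure_eq.1 hdense, Set.image_univ]
  exact Set.range_eq_univ.2 (Homeomorph.addLeft x₀).surjective
end

section
/- Let E be a locally convex topological vector space and F a closed subspace of E of finite codimension. Linear functionals f₁,…,fₙ on E are completely discontinuous on E if and only if their restrictions to F are completely discontinuous on F. -/
/-- A linear functional on `E` whose restriction to a closed finite-codimension
subspace `F` is continuous is itself continuous. -/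
lemma continuous_of_continuous_restrict
    {E : Type*} [AddCommGroup E] [Module ℂ E] [TopologicalSpace E]
    [IsTopologicalAddGroup E] [ContinuousSMul ℂ E]
    (F : Submodule ℂ E) (hFc : IsClosed (F : Set E))
    (hcodim : FiniteDimensional ℂ (E ⧸ F))
    (g : E →ₗ[ℂ] ℂ) (hg : Continuous (g.comp F.subtype)) : Continuous g := by
  haveI : IsClosed (F : Set E) := hFc
  obtain ⟨s, hs⟩ := (F.mkQ).exists_rightInverse_of_surjective
    (by rw [Submodule.range_mkQ])
  have hsc : Continuous s := LinearMap.continuous_of_finiteDimensional s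
  have hgs : Continuous (g.comp s) := LinearMap.continuous_of_finiteDimensional _
  have hmem : ∀ x : E, x - s (F.mkQ x) ∈ F := by
    intro x
    rw [← Submodule.Quotient.mk_eq_zero F]
    have := LinearMap.congr_fun hs (F.mkQ x)
    simp only [LinearMap.comp_apply, LinearMap.id_apply] at this
    simp only [Submodule.Quotient.mk_sub, sub_eq_zero]
    simpa [Submodule.mkQ_apply] using this.symm
  have key : ∀ x : E, g x = g.comp F.subtype ⟨x - s (F.mkQ x), hmem x⟩ + g.comp s (F.mkQ x) := by
    intro x
    simp [LinearMap.comp_apply, ← map_add]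
  have hcont : Continuous fun x : E =>
      g.comp F.subtype ⟨x - s (F.mkQ x), hmem x⟩ + g.comp s (F.mkQ x) := by
    apply Continuous.add
    · exact hg.comp (Continuous.subtype_mk
        (continuous_id.sub (hsc.comp (continuous_quot_mk))) _)
    · exact hgs.comp continuous_quot_mk
  exact (funext key : (g : E → ℂ) = _) ▸ hcont

theorem completelyDiscontinuous_iff_restriction
    {E : Type*} [AddCommGroup E] [Module ℂ E] [TopologicalSpace E]
    [IsTopologicalAddGroup E] [ContinuousSMul ℂ E] [LocallyConvexSpace ℝ E]
    [Module ℝ E] [IsScalarTower ℝ ℂ E]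
    (F : Submodule ℂ E) (hFc : IsClosed (F : Set E))
    (hcodim : FiniteDimensional ℂ (E ⧸ F))
    (n : ℕ) (f : Fin n → (E →ₗ[ℂ] ℂ)) :
    (∀ c : Fin n → ℂ, Continuous (fun x => ∑ i, c i * f i x) → c = 0) ↔
      (∀ c : Fin n → ℂ,
        Continuous (fun x : F => ∑ i, c i * (f i).comp F.subtype x) → c = 0) := by
  constructor
  · intro h c hc
    apply h c
    have : (fun x : E => ∑ i, c i * f i x) = ⇑(∑ i, c i • f i) := by
      ext x; simp
    rw [this]
    have hr : (fun x : F => ∑ i, c i * (f i).comp F.subtype x)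
        = ⇑((∑ i, c i • f i).comp F.subtype) := by
      ext x; simp
    rw [hr] at hc
    exact continuous_of_continuous_restrict F hFc hcodim _ hc
  · intro h c hc
    apply h c
    exact hc.comp continuous_subtype_val
end

section
/- Let F be non-decreasing on [1,∞), β ∈ ℝ, m ∈ ℕ, and suppose ∫₁ˣ t^β (1 - t/x)^m dF(t) = O(x^α) as x → ∞. Then ∫₁ˣ t^β dF(t) = O(x^α) as x → ∞. -/
open MeasureTheory Set

theorem cesaro_bound_implies_bound
    (F : StieltjesFunction ℝ) (α β : ℝ) (m : ℕ) (C : ℝ)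
    (hC : ∀ x ≥ (1 : ℝ),
      ∫ t in Icc 1 x, t ^ β * (1 - t / x) ^ m ∂F.measure ≤ C * x ^ α) :
    ∃ C' : ℝ, ∀ x ≥ (1 : ℝ),
      ∫ t in Icc 1 x, t ^ β ∂F.measure ≤ C' * x ^ α := by
  refine ⟨2 ^ m * 2 ^ α * C, fun x hx => ?_⟩
  have hx0 : (0:ℝ) < x := lt_of_lt_of_le one_pos hx
  have hy1 : (1:ℝ) ≤ 2 * x := by linarith
  have hy0 : (0:ℝ) < 2 * x := by linarith
  have hcont : ContinuousOn (fun t : ℝ => t ^ β * (1 - t / (2*x)) ^ m) (Icc 1 (2*x)) := by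
    apply ContinuousOn.mul
    · exact continuousOn_id.rpow_const (fun t ht => Or.inl (by simp only [id]; intro h; rw [h] at ht; linarith [ht.1]))
    · exact Continuous.continuousOn (by continuity)
  have hint : IntegrableOn (fun t : ℝ => t ^ β * (1 - t / (2*x)) ^ m) (Icc 1 (2*x)) F.measure :=
    hcont.integrableOn_compact isCompact_Icc
  have hintx : IntegrableOn (fun t : ℝ => t ^ β * (1 - t / (2*x)) ^ m) (Icc 1 x) F.measure :=
    hint.mono_set (Icc_subset_Icc le_rfl (by linarith))
  have hintb : IntegrableOn (fun t : ℝ => t ^ β) (Icc 1 x) F.measure := by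
    have hc : ContinuousOn (fun t : ℝ => t ^ β) (Icc 1 x) :=
      continuousOn_id.rpow_const (fun t ht => Or.inl (by simp only [id]; intro h; rw [h] at ht; linarith [ht.1]))
    exact hc.integrableOn_compact isCompact_Icc
  have h1 : ∫ t in Icc 1 x, t ^ β ∂F.measure
      ≤ ∫ t in Icc 1 x, (2:ℝ) ^ m * (t ^ β * (1 - t / (2*x)) ^ m) ∂F.measure := by
    apply setIntegral_mono_on hintb (hintx.const_mul _) measurableSet_Icc
    intro t ht
    have ht1 : (1:ℝ) ≤ t := ht.1
    have ht0 : (0:ℝ) < t := by linarith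
    have h2 : t / (2*x) ≤ 1/2 := by
      rw [div_le_div_iff₀ hy0 two_pos]; linarith [ht.2]
    have h3 : (1:ℝ)/2 ≤ 1 - t/(2*x) := by linarith
    have h4 : ((1:ℝ)/2) ^ m ≤ (1 - t/(2*x)) ^ m := pow_le_pow_left₀ (by norm_num) h3 m
    have h5 : (1:ℝ) ≤ 2 ^ m * (1 - t/(2*x)) ^ m := by
      calc (1:ℝ) = 2^m * (1/2)^m := by rw [← mul_pow]; norm_num
        _ ≤ 2^m * (1 - t/(2*x))^m :=
          mul_le_mul_of_nonneg_left h4 (pow_nonneg (by norm_num) m)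
    have h6 : 0 ≤ t ^ β := Real.rpow_nonneg ht0.le β
    calc t ^ β = 1 * t ^ β := (one_mul _).symm
      _ ≤ (2^m * (1 - t/(2*x))^m) * t ^ β := mul_le_mul_of_nonneg_right h5 h6
      _ = 2^m * (t^β * (1 - t/(2*x))^m) := by ring
  have h2 : ∫ t in Icc 1 x, (2:ℝ) ^ m * (t ^ β * (1 - t / (2*x)) ^ m) ∂F.measure
      ≤ ∫ t in Icc 1 (2*x), (2:ℝ) ^ m * (t ^ β * (1 - t / (2*x)) ^ m) ∂F.measure := by
    apply setIntegral_mono_set (hint.const_mul _)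
    · filter_upwards [ae_restrict_mem measurableSet_Icc] with t ht
      have ht0 : (0:ℝ) < t := lt_of_lt_of_le one_pos ht.1
      have hle : t / (2*x) ≤ 1 := (div_le_one hy0).2 ht.2
      have h6 : 0 ≤ t ^ β := Real.rpow_nonneg ht0.le β
      exact mul_nonneg (pow_nonneg (by norm_num) m)
        (mul_nonneg h6 (pow_nonneg (by linarith) m))
    · exact HasSubset.Subset.eventuallyLE (Icc_subset_Icc le_rfl (by linarith))
  have h3 : ∫ t in Icc 1 (2*x), (2:ℝ) ^ m * (t ^ β * (1 - t / (2*x)) ^ m) ∂F.measure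
      = 2^m * ∫ t in Icc 1 (2*x), t ^ β * (1 - t / (2*x)) ^ m ∂F.measure :=
    integral_const_mul _ _
  have h4 := hC (2*x) hy1
  have h5 : ((2:ℝ)*x)^α = 2^α * x^α := Real.mul_rpow (by norm_num) hx0.le
  calc ∫ t in Icc 1 x, t ^ β ∂F.measure
      ≤ ∫ t in Icc 1 (2*x), (2:ℝ) ^ m * (t ^ β * (1 - t / (2*x)) ^ m) ∂F.measure :=
        h1.trans h2
    _ = 2^m * ∫ t in Icc 1 (2*x), t ^ β * (1 - t / (2*x)) ^ m ∂F.measure := h3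
    _ ≤ 2^m * (C * (2*x)^α) :=
        mul_le_mul_of_nonneg_left h4 (pow_nonneg (by norm_num) m)
    _ = 2 ^ m * 2 ^ α * C * x ^ α := by rw [h5]; ring
end
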